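/- Let n ≥ 1, m = 2n, and let C ∈ ℂ^{2n×4n} be a normalized system of boundary conditions of rank 2n that is dissipative. Let C^{sa} ∈ ℂ^{2n×4n} be the truncated system obtained from C by keeping in each row only the leading-pair entries and replacing all other entries by 0 (i.e. C^{sa}_{j,k} = C_{j,k} if k = k_j or k = 2n + k_j, where k_j is the order of row j, and C^{sa}_{j,k} = 0 otherwise). Then the truncated conditions are self-adjoint: q_J(v) − q_J(u) = 0 for every (u,v) ∈ ℂ^{2n}×ℂ^{2n} satisfying Σ_{k=0}^{2n−1} C^{sa}_{j,k}u_k + C^{sa}_{j,2n+k}v_k = 0 for all rows j. -/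

import Mathlib

open ComplexOrder

/-- A system of boundary conditions of order `2n` is a matrix `C ∈ ℂ^{2n×4n}`; we index
the `4n` columns by `Fin (2n) ⊕ Fin (2n)`: `Sum.inl k` is the coefficient of `y^{(k)}(0)`
and `Sum.inr k` that of `y^{(k)}(1)`.  The order of row `j` is the largest `k` with
`(C_{j,k}, C_{j,2n+k}) ≠ (0,0)`. -/
noncomputable def rowOrder {m : ℕ} (C : Matrix (Fin m) (Fin m ⊕ Fin m) ℂ) (j : Fin m) : ℕ :=
  sSup {k : ℕ | ∃ h : k < m, C j (Sum.inl ⟨k, h⟩) ≠ 0 ∨ C j (Sum.inr ⟨k, h⟩) ≠ 0}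

/-- The leading pair `(α_j, β_j) = (C_{j,k_j}, C_{j,m+k_j})` of row `j`. -/
noncomputable def leadingPair {m : ℕ} (C : Matrix (Fin m) (Fin m ⊕ Fin m) ℂ) (j : Fin m) :
    ℂ × ℂ :=
  if h : rowOrder C j < m then
    (C j (Sum.inl ⟨rowOrder C j, h⟩), C j (Sum.inr ⟨rowOrder C j, h⟩))
  else 0

/-- The system `C` is normalized if, for every value `k`, the leading pairs of the rows
of order `k` are linearly independent in `ℂ²`. -/
def IsNormalized {m : ℕ} (C : Matrix (Fin m) (Fin m ⊕ Fin m) ℂ) : Prop :=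
  ∀ k : ℕ, LinearIndependent ℂ (fun j : {j : Fin m // rowOrder C j = k} => leadingPair C j.1)

/-- The quadratic form `q_J(u) = i·(−1)^{n+1} · Σ_{p=0}^{2n−1} (−1)^{p+1} u_p·conj(u_{2n−1−p})`. -/
noncomputable def qJ (n : ℕ) (u : Fin (2 * n) → ℂ) : ℂ :=
  Complex.I * (-1 : ℂ) ^ (n + 1) *
    ∑ p : Fin (2 * n), (-1 : ℂ) ^ ((p : ℕ) + 1) * u p * (starRingEnd ℂ) (u p.rev)

/-- The system `C` is dissipative if `q_J(v) − q_J(u) ≥ 0` for every `(u,v)` satisfying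
`Σ_k C_{j,k}u_k + C_{j,2n+k}v_k = 0` for all rows `j` (dissipativity of the operator
generated by `l₀(y) = (−i)^{2n}y^{(2n)}` and these boundary conditions). -/
def IsDissipativeBC (n : ℕ) (C : Matrix (Fin (2 * n)) (Fin (2 * n) ⊕ Fin (2 * n)) ℂ) : Prop :=
  ∀ u v : Fin (2 * n) → ℂ,
    (∀ j, ∑ k, (C j (Sum.inl k) * u k + C j (Sum.inr k) * v k) = 0) →
    0 ≤ qJ n v - qJ n u


namespace Stmt17Aux

open Matrix

/-- index of a column -/
def idx {m : ℕ} : Fin m ⊕ Fin m → ℕ := Sum.elim Fin.val Fin.val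

/-- truncated system -/
noncomputable def trunc {m : ℕ} (C : Matrix (Fin m) (Fin m ⊕ Fin m) ℂ) :
    Matrix (Fin m) (Fin m ⊕ Fin m) ℂ :=
  fun j c => if idx c = rowOrder C j then C j c else 0

variable {m : ℕ} {C : Matrix (Fin m) (Fin m ⊕ Fin m) ℂ}

lemma bddAbove_orderSet (j : Fin m) :
    BddAbove {k : ℕ | ∃ h : k < m, C j (Sum.inl ⟨k, h⟩) ≠ 0 ∨ C j (Sum.inr ⟨k, h⟩) ≠ 0} :=
  ⟨m, fun k hk => by obtain ⟨h, -⟩ := hk; exact h.le⟩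

lemma leadingPair_ne_zero (hnorm : IsNormalized C) (j : Fin m) : leadingPair C j ≠ 0 :=
  (hnorm (rowOrder C j)).ne_zero (⟨j, rfl⟩ : {j' : Fin m // rowOrder C j' = rowOrder C j})

lemma orderSet_nonempty (hm : 0 < m) (hnorm : IsNormalized C) (j : Fin m) :
    {k : ℕ | ∃ h : k < m, C j (Sum.inl ⟨k, h⟩) ≠ 0 ∨ C j (Sum.inr ⟨k, h⟩) ≠ 0}.Nonempty := by
  by_contra h
  rw [Set.not_nonempty_iff_eq_empty] at h
  have h0 : rowOrder C j = 0 := by rw [rowOrder, h, csSup_empty]; rfl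
  apply leadingPair_ne_zero hnorm j
  have hlt : rowOrder C j < m := h0 ▸ hm
  have e1 : C j (Sum.inl ⟨rowOrder C j, hlt⟩) = 0 := by
    by_contra hne
    exact Set.eq_empty_iff_forall_notMem.1 h (rowOrder C j) ⟨hlt, Or.inl hne⟩
  have e2 : C j (Sum.inr ⟨rowOrder C j, hlt⟩) = 0 := by
    by_contra hne
    exact Set.eq_empty_iff_forall_notMem.1 h (rowOrder C j) ⟨hlt, Or.inr hne⟩
  rw [leadingPair, dif_pos hlt, e1, e2]
  rfl

lemma rowOrder_lt (hm : 0 < m) (hnorm : IsNormalized C) (j : Fin m) : rowOrder C j < m := by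
  obtain ⟨h, -⟩ := Nat.sSup_mem (orderSet_nonempty hm hnorm j) (bddAbove_orderSet j)
  exact h

lemma entry_eq_zero_of_lt (j : Fin m) (c : Fin m ⊕ Fin m) (h : rowOrder C j < idx c) :
    C j c = 0 := by
  by_contra hne
  have hmem : idx c ∈ {k : ℕ | ∃ h : k < m,
      C j (Sum.inl ⟨k, h⟩) ≠ 0 ∨ C j (Sum.inr ⟨k, h⟩) ≠ 0} := by
    cases c with
    | inl k => exact ⟨k.isLt, Or.inl (by simpa [idx] using hne)⟩
    | inr k => exact ⟨k.isLt, Or.inr (by simpa [idx] using hne)⟩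
  exact absurd (le_csSup (bddAbove_orderSet j) hmem) (not_le.2 h)


open Matrix in
lemma vecMul_trunc_eq_zero (hm : 0 < m) (hnorm : IsNormalized C) (y : Fin m → ℂ)
    (hy : y ᵥ* trunc C = 0) : y = 0 := by
  funext j0
  set k := rowOrder C j0 with hk
  have hklt : k < m := rowOrder_lt hm hnorm j0
  set Kc : Fin m := ⟨k, hklt⟩ with hKc
  have key : ∀ c : Fin m ⊕ Fin m, idx c = k →
      ∑ j : {j : Fin m // rowOrder C j = k}, y j.1 * C j.1 c = 0 := by
    intro c hc
    have h0 := congr_fun hy c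
    simp only [Matrix.vecMul, dotProduct, Pi.zero_apply, trunc, hc] at h0
    rw [← h0]
    rw [← Finset.sum_subtype (Finset.univ.filter (fun j => rowOrder C j = k))
      (fun j => by simp) (fun j => y j * C j c)]
    rw [Finset.sum_filter]
    apply Finset.sum_congr rfl
    intro j _
    by_cases hj : rowOrder C j = k
    · simp [hj]
    · simp [hj, Ne.symm hj]
  have hsum : ∑ j : {j : Fin m // rowOrder C j = k},
      (y j.1) • leadingPair C j.1 = (0 : ℂ × ℂ) := by
    have hlp : ∀ j : {j : Fin m // rowOrder C j = k},
        leadingPair C j.1 = (C j.1 (Sum.inl Kc), C j.1 (Sum.inr Kc)) := by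
      intro j
      have hjlt : rowOrder C j.1 < m := by rw [j.2]; exact hklt
      have hfin : (⟨rowOrder C j.1, hjlt⟩ : Fin m) = Kc := Fin.ext j.2
      rw [leadingPair, dif_pos hjlt, hfin]
    apply Prod.ext
    · rw [Prod.fst_sum]
      simpa only [hlp, Prod.smul_fst, smul_eq_mul, Prod.fst_zero] using key (Sum.inl Kc) rfl
    · rw [Prod.snd_sum]
      simpa only [hlp, Prod.smul_snd, smul_eq_mul, Prod.snd_zero] using key (Sum.inr Kc) rfl
  exact Fintype.linearIndependent_iff.1 (hnorm k) _ hsum ⟨j0, hk.symm⟩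

open Matrix in
lemma isUnit_det_G0 (hm : 0 < m) (hnorm : IsNormalized C) :
    IsUnit (trunc C * (trunc C)ᴴ).det := by
  rw [← Matrix.isUnit_iff_isUnit_det, ← Matrix.vecMul_injective_iff_isUnit]
  have hker : ∀ y : Fin m → ℂ, y ᵥ* (trunc C * (trunc C)ᴴ) = 0 → y = 0 := by
    intro y hy
    set z := y ᵥ* trunc C with hz
    have h1 : z ᵥ* (trunc C)ᴴ = 0 := by
      show (y ᵥ* trunc C) ᵥ* (trunc C)ᴴ = 0
      rw [Matrix.vecMul_vecMul]; exact hy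
    have h2 : z ⬝ᵥ star z = 0 := by
      rw [show star z = (trunc C)ᴴ *ᵥ star y by rw [hz, Matrix.star_vecMul],
        Matrix.dotProduct_mulVec, h1, zero_dotProduct]
    have h3 : z = 0 := by
      have := dotProduct_star_self_eq_zero (R := ℂ) (v := star z)
      rw [star_star] at this
      have hz0 : star z = 0 := this.1 h2
      simpa using congrArg star hz0
    exact vecMul_trunc_eq_zero hm hnorm y h3
  intro a b hab
  simp only at hab
  have h4 : (a - b) ᵥ* (trunc C * (trunc C)ᴴ) = 0 := by
    rw [Matrix.sub_vecMul, hab, sub_self]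
  exact sub_eq_zero.1 (hker _ h4)


lemma rev_val_add (p : Fin (2 * n)) : (p : ℕ) + (p.rev : ℕ) = 2 * n - 1 := by
  have := p.isLt
  rw [Fin.val_rev]
  omega

lemma rev_ne (hn : 1 ≤ n) (p : Fin (2 * n)) : p ≠ p.rev := by
  intro h
  have hval := congrArg Fin.val h
  rw [Fin.val_rev] at hval
  have := p.isLt
  omega

/-- difference of the two quadratic forms, as a single sum -/
lemma qJ_sub (u v : Fin (2 * n) → ℂ) :
    qJ n v - qJ n u = Complex.I * (-1 : ℂ) ^ (n + 1) *
      ∑ p : Fin (2 * n), (-1 : ℂ) ^ ((p : ℕ) + 1) *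
        (v p * (starRingEnd ℂ) (v p.rev) - u p * (starRingEnd ℂ) (u p.rev)) := by
  rw [qJ, qJ, ← mul_sub, ← Finset.sum_sub_distrib]
  congr 1
  apply Finset.sum_congr rfl
  intro p _
  ring

lemma qJ_mask (σ : ℕ → ℂ) (hσ : ∀ q, (starRingEnd ℂ) (σ q) = σ q) (u : Fin (2 * n) → ℂ) :
    qJ n (fun k => σ (k : ℕ) * u k) = Complex.I * (-1 : ℂ) ^ (n + 1) *
      ∑ p : Fin (2 * n), σ (p : ℕ) * σ ((p.rev : Fin (2 * n)) : ℕ) *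
        ((-1 : ℂ) ^ ((p : ℕ) + 1) * u p * (starRingEnd ℂ) (u p.rev)) := by
  rw [qJ]
  congr 1
  apply Finset.sum_congr rfl
  intro p _
  rw [_root_.map_mul, hσ]
  ring

lemma qJ_inv_scale (t : ℝ) (ht : (t : ℂ) ≠ 0) (u : Fin (2 * n) → ℂ) :
    qJ n (fun k => ((t : ℂ) ^ (k : ℕ))⁻¹ * u k) = ((t : ℂ) ^ (2 * n - 1))⁻¹ * qJ n u := by
  have key : ∑ p : Fin (2 * n), (-1 : ℂ) ^ ((p : ℕ) + 1) * (((t : ℂ) ^ (p : ℕ))⁻¹ * u p) *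
        (starRingEnd ℂ) (((t : ℂ) ^ ((p.rev : Fin (2*n)) : ℕ))⁻¹ * u p.rev)
      = ((t : ℂ) ^ (2 * n - 1))⁻¹ *
        ∑ p : Fin (2 * n), (-1 : ℂ) ^ ((p : ℕ) + 1) * u p * (starRingEnd ℂ) (u p.rev) := by
    rw [Finset.mul_sum]
    apply Finset.sum_congr rfl
    intro p _
    have hpow : (t : ℂ) ^ (p : ℕ) * (t : ℂ) ^ ((p.rev : Fin (2*n)) : ℕ)
        = (t : ℂ) ^ (2 * n - 1) := by
      rw [← pow_add, rev_val_add]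
    have hconj : (starRingEnd ℂ) (((t : ℂ) ^ ((p.rev : Fin (2*n)) : ℕ))⁻¹ * u p.rev)
        = ((t : ℂ) ^ ((p.rev : Fin (2*n)) : ℕ))⁻¹ * (starRingEnd ℂ) (u p.rev) := by
      rw [_root_.map_mul, map_inv₀, ← Complex.ofReal_pow, Complex.conj_ofReal]
    rw [hconj]
    rw [← hpow, mul_inv]
    ring
  rw [qJ, qJ, key]
  ring


lemma ofReal_mul_nonneg {r : ℝ} (hr : 0 ≤ r) {z : ℂ} (hz : 0 ≤ z) : 0 ≤ (r : ℂ) * z := by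
  rw [Complex.nonneg_iff] at hz ⊢
  constructor
  · simp only [Complex.mul_re, Complex.ofReal_re, Complex.ofReal_im, zero_mul, sub_zero]
    exact mul_nonneg hr hz.1
  · simp only [Complex.mul_im, Complex.ofReal_re, Complex.ofReal_im, zero_mul, add_zero]
    rw [← hz.2, mul_zero]

open Matrix Filter Topology in
lemma Q_nonneg (n : ℕ) (hn : 1 ≤ n) (C : Matrix (Fin (2*n)) (Fin (2*n) ⊕ Fin (2*n)) ℂ)
    (hnorm : IsNormalized C) (hdiss : IsDissipativeBC n C)
    (w : (Fin (2*n) ⊕ Fin (2*n)) → ℂ) (hw : trunc C *ᵥ w = 0) :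
    0 ≤ qJ n (fun k => w (Sum.inr k)) - qJ n (fun k => w (Sum.inl k)) := by
  have hm : 0 < 2*n := by omega
  set A : ℝ → Matrix (Fin (2*n)) (Fin (2*n) ⊕ Fin (2*n)) ℂ := fun t j c =>
    (if idx c ≤ rowOrder C j then (t:ℂ) ^ (rowOrder C j - idx c) else 0) * C j c with hA
  have hA0 : A 0 = trunc C := by
    funext j c
    simp only [hA, trunc]
    rcases lt_trichotomy (idx c) (rowOrder C j) with h | h | h
    · rw [if_pos h.le, if_neg (by omega), Complex.ofReal_zero,
        zero_pow (by omega), zero_mul]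
    · rw [if_pos h.le, if_pos h, h, Nat.sub_self, pow_zero, one_mul]
    · rw [if_neg (by omega), if_neg (by omega), zero_mul]
  have hAcont : Continuous A := by
    apply continuous_matrix
    intro j c
    by_cases h : idx c ≤ rowOrder C j
    · simp only [hA, if_pos h]
      exact (Complex.continuous_ofReal.pow _).mul continuous_const
    · simp only [hA, if_neg h]
      exact continuous_const
  set G : ℝ → Matrix (Fin (2*n)) (Fin (2*n)) ℂ := fun t => A t * (A t)ᴴ with hG
  have hGcont : Continuous G := hAcont.matrix_mul hAcont.matrix_conjTranspose
  have hdet0 : (G 0).det ≠ 0 := by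
    rw [hG]; simp only [hA0]
    exact (isUnit_det_G0 hm hnorm).ne_zero
  set F : ℝ → ((Fin (2*n) ⊕ Fin (2*n)) → ℂ) := fun t =>
    w - ((A t)ᴴ * (((G t).det)⁻¹ • (G t).adjugate)) *ᵥ (A t *ᵥ w) with hF
  have hF2 : Continuous (fun p : ℝ × ℂ =>
      w - ((A p.1)ᴴ * (p.2 • (G p.1).adjugate)) *ᵥ (A p.1 *ᵥ w)) := by
    apply Continuous.sub continuous_const
    apply Continuous.matrix_mulVec
    · apply Continuous.matrix_mul
      · exact (hAcont.comp continuous_fst).matrix_conjTranspose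
      · exact continuous_snd.smul ((hGcont.comp continuous_fst).matrix_adjugate)
    · exact (hAcont.comp continuous_fst).matrix_mulVec continuous_const
  have hFt : ContinuousAt F 0 := by
    have h1 : ContinuousAt (fun t : ℝ => (t, ((G t).det)⁻¹)) 0 :=
      continuousAt_id.prodMk ((hGcont.matrix_det.continuousAt).inv₀ hdet0)
    exact (hF2.continuousAt.comp h1 : _)
  have hF0 : F 0 = w := by
    rw [hF]; simp only [hA0, hw, Matrix.mulVec_zero, sub_zero]
  have hFker : ∀ t : ℝ, (G t).det ≠ 0 → A t *ᵥ F t = 0 := by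
    intro t hdet
    have hGinv : G t * (((G t).det)⁻¹ • (G t).adjugate) = 1 := by
      rw [Matrix.mul_smul, Matrix.mul_adjugate, smul_smul,
        inv_mul_cancel₀ hdet, one_smul]
    have hAA : A t * (A t)ᴴ * (((G t).det)⁻¹ • (G t).adjugate) * A t = A t := by
      rw [show A t * (A t)ᴴ = G t from rfl, hGinv, Matrix.one_mul]
    rw [hF]
    rw [Matrix.mulVec_sub, Matrix.mulVec_mulVec, Matrix.mulVec_mulVec,
      ← Matrix.mul_assoc, hAA]
    exact sub_self _
  have hev : ∀ᶠ t in 𝓝[>] (0:ℝ),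
      0 ≤ qJ n (fun k => F t (Sum.inr k)) - qJ n (fun k => F t (Sum.inl k)) := by
    have hdetev : ∀ᶠ t in 𝓝 (0:ℝ), (G t).det ≠ 0 :=
      (hGcont.matrix_det.continuousAt).eventually_ne hdet0
    filter_upwards [eventually_nhdsWithin_of_eventually_nhds hdetev,
      self_mem_nhdsWithin] with t hdet ht
    have ht' : (0:ℝ) < t := ht
    have htne : (t:ℂ) ≠ 0 := by
      simpa using Complex.ofReal_ne_zero.2 (ne_of_gt ht')
    have hker := hFker t hdet
    set x : (Fin (2*n) ⊕ Fin (2*n)) → ℂ := fun c => ((t:ℂ) ^ idx c)⁻¹ * F t c with hx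
    have hcx : ∀ j, ∑ k : Fin (2*n),
        (C j (Sum.inl k) * x (Sum.inl k) + C j (Sum.inr k) * x (Sum.inr k)) = 0 := by
      intro j
      have hrow : ∑ c : Fin (2*n) ⊕ Fin (2*n), C j c * x c =
          ((t:ℂ) ^ (rowOrder C j))⁻¹ * ∑ c, A t j c * F t c := by
        rw [Finset.mul_sum]
        apply Finset.sum_congr rfl
        intro c _
        by_cases hc : idx c ≤ rowOrder C j
        · have hpow : (t:ℂ)^(rowOrder C j) =
              (t:ℂ)^(rowOrder C j - idx c) * (t:ℂ)^(idx c) := by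
            rw [← pow_add]; congr 1; omega
          have hinv : ((t:ℂ)^(idx c))⁻¹ =
              ((t:ℂ)^(rowOrder C j))⁻¹ * (t:ℂ)^(rowOrder C j - idx c) := by
            rw [hpow, mul_inv, mul_assoc,
              mul_comm (((t:ℂ)^(idx c))⁻¹) ((t:ℂ)^(rowOrder C j - idx c)), ← mul_assoc,
              inv_mul_cancel₀ (pow_ne_zero _ htne), one_mul]
          simp only [hx, hA, if_pos hc]
          rw [hinv]; ring
        · have hC0 : C j c = 0 := entry_eq_zero_of_lt j c (by omega)
          simp only [hx, hA, if_neg hc, hC0, zero_mul, mul_zero]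
      rw [Finset.sum_add_distrib, ← Fintype.sum_sum_type
        (fun c : Fin (2*n) ⊕ Fin (2*n) => C j c * x c), hrow]
      have hzero : ∑ c, A t j c * F t c = 0 := by
        have := congr_fun hker j
        simpa [Matrix.mulVec, dotProduct] using this
      rw [hzero, mul_zero]
    have h0 := hdiss _ _ hcx
    have e1 : qJ n (fun k => x (Sum.inl k)) =
        ((t:ℂ)^(2*n-1))⁻¹ * qJ n (fun k => F t (Sum.inl k)) :=
      qJ_inv_scale t htne _
    have e2 : qJ n (fun k => x (Sum.inr k)) =
        ((t:ℂ)^(2*n-1))⁻¹ * qJ n (fun k => F t (Sum.inr k)) :=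
      qJ_inv_scale t htne _
    rw [e1, e2, ← mul_sub] at h0
    have hrw : qJ n (fun k => F t (Sum.inr k)) - qJ n (fun k => F t (Sum.inl k)) =
        ((t^(2*n-1) : ℝ) : ℂ) * (((t:ℂ)^(2*n-1))⁻¹ *
          (qJ n (fun k => F t (Sum.inr k)) - qJ n (fun k => F t (Sum.inl k)))) := by
      push_cast
      rw [← mul_assoc, mul_inv_cancel₀ (pow_ne_zero _ htne), one_mul]
    rw [hrw]
    exact ofReal_mul_nonneg (le_of_lt (pow_pos ht' _)) h0
  have htend : Tendsto F (𝓝[>] (0:ℝ)) (𝓝 w) := by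
    have h1 := hFt.tendsto
    rw [hF0] at h1
    exact tendsto_nhdsWithin_of_tendsto_nhds h1
  have hq : Continuous (qJ n) := by
    apply Continuous.mul continuous_const
    apply continuous_finset_sum
    intro p _
    exact (continuous_const.mul (continuous_apply p)).mul
      (Complex.continuous_conj.comp (continuous_apply p.rev))
  have hQcont : Continuous (fun w' : (Fin (2*n) ⊕ Fin (2*n)) → ℂ =>
      qJ n (fun k => w' (Sum.inr k)) - qJ n (fun k => w' (Sum.inl k))) :=
    (hq.comp (continuous_pi fun k => continuous_apply (Sum.inr k))).sub
      (hq.comp (continuous_pi fun k => continuous_apply (Sum.inl k)))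
  have hclosed : IsClosed {z : ℂ | 0 ≤ z} := by
    have hset : {z : ℂ | 0 ≤ z} = Complex.re ⁻¹' (Set.Ici 0) ∩ Complex.im ⁻¹' {0} := by
      ext z
      simp [Complex.nonneg_iff, eq_comm]
    rw [hset]
    exact (isClosed_Ici.preimage Complex.continuous_re).inter
      (isClosed_singleton.preimage Complex.continuous_im)
  exact hclosed.mem_of_tendsto ((hQcont.tendsto w).comp htend) hev


theorem stmt17_main (n : ℕ) (hn : 1 ≤ n)
    (C : Matrix (Fin (2 * n)) (Fin (2 * n) ⊕ Fin (2 * n)) ℂ)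
    (hrank : C.rank = 2 * n) (hnorm : IsNormalized C) (hdiss : IsDissipativeBC n C) :
    ∀ u v : Fin (2 * n) → ℂ,
      (∀ j, ∑ k : Fin (2 * n),
          ((if k.val = rowOrder C j then C j (Sum.inl k) else 0) * u k
            + (if k.val = rowOrder C j then C j (Sum.inr k) else 0) * v k) = 0) →
      qJ n v - qJ n u = 0 := by
  intro u v hbc
  have hm : 0 < 2 * n := by omega
  have hlt : ∀ j, rowOrder C j < 2 * n := rowOrder_lt hm hnorm
  set Kf : Fin (2 * n) → Fin (2 * n) := fun j => ⟨rowOrder C j, hlt j⟩ with hKf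
  -- rewrite boundary conditions in pointwise form
  have hsum_eq : ∀ (u' v' : Fin (2 * n) → ℂ) (j : Fin (2 * n)),
      (∑ k : Fin (2 * n),
        ((if k.val = rowOrder C j then C j (Sum.inl k) else 0) * u' k
          + (if k.val = rowOrder C j then C j (Sum.inr k) else 0) * v' k)) =
      C j (Sum.inl (Kf j)) * u' (Kf j) + C j (Sum.inr (Kf j)) * v' (Kf j) := by
    intro u' v' j
    have : ∀ k : Fin (2 * n),
        ((if k.val = rowOrder C j then C j (Sum.inl k) else 0) * u' k
          + (if k.val = rowOrder C j then C j (Sum.inr k) else 0) * v' k)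
        = if k = Kf j then
            C j (Sum.inl k) * u' k + C j (Sum.inr k) * v' k else 0 := by
      intro k
      by_cases hk : k = Kf j
      · have : k.val = rowOrder C j := by rw [hk]
        simp [hk, this, hKf]
      · have : ¬ (k.val = rowOrder C j) := by
          intro hv; exact hk (Fin.ext hv)
        simp [hk, this]
    rw [Finset.sum_congr rfl (fun k _ => this k), Finset.sum_ite_eq' Finset.univ (Kf j)
      (fun k => C j (Sum.inl k) * u' k + C j (Sum.inr k) * v' k), if_pos (Finset.mem_univ _)]
  have hker : ∀ j, C j (Sum.inl (Kf j)) * u (Kf j) + C j (Sum.inr (Kf j)) * v (Kf j) = 0 := by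
    intro j; rw [← hsum_eq u v j]; exact hbc j
  -- the summand
  set T : Fin (2 * n) → ℂ := fun p => (-1 : ℂ) ^ ((p : ℕ) + 1) *
    (v p * (starRingEnd ℂ) (v p.rev) - u p * (starRingEnd ℂ) (u p.rev)) with hT
  set c : ℂ := Complex.I * (-1 : ℂ) ^ (n + 1) with hc
  -- for every conjugation-fixed scalar mask, the masked form is nonnegative
  have key : ∀ σ : ℕ → ℂ, (∀ q, (starRingEnd ℂ) (σ q) = σ q) →
      0 ≤ c * ∑ p : Fin (2 * n), σ (p : ℕ) * σ ((p.rev : Fin (2 * n)) : ℕ) * T p := by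
    intro σ hσ
    set w1 : (Fin (2 * n) ⊕ Fin (2 * n)) → ℂ :=
      fun cc => σ (idx cc) * Sum.elim u v cc with hw1
    have htr : trunc C *ᵥ w1 = 0 := by
      funext j
      have hmv : (trunc C *ᵥ w1) j = ∑ cc : Fin (2*n) ⊕ Fin (2*n), trunc C j cc * w1 cc := rfl
      have hterm : ∀ cc : Fin (2*n) ⊕ Fin (2*n), trunc C j cc * w1 cc =
          (if cc = Sum.inl (Kf j) then C j cc * w1 cc else 0)
          + (if cc = Sum.inr (Kf j) then C j cc * w1 cc else 0) := by
        have hvl : idx (Sum.inl (Kf j)) = rowOrder C j := rfl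
        have hvr : idx (Sum.inr (Kf j)) = rowOrder C j := rfl
        intro cc
        rcases cc with k | k
        · by_cases hk : k = Kf j
          · rw [hk]
            simp [trunc, hvl]
          · have hv : ¬ (idx (Sum.inl k) = rowOrder C j) := fun hv => hk (Fin.ext hv)
            simp [trunc, hv, hk]
        · by_cases hk : k = Kf j
          · rw [hk]
            simp [trunc, hvr]
          · have hv : ¬ (idx (Sum.inr k) = rowOrder C j) := fun hv => hk (Fin.ext hv)
            simp [trunc, hv, hk]
      rw [hmv, Finset.sum_congr rfl (fun cc _ => hterm cc), Finset.sum_add_distrib,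
        Finset.sum_ite_eq' Finset.univ (Sum.inl (Kf j)) (fun cc => C j cc * w1 cc),
        Finset.sum_ite_eq' Finset.univ (Sum.inr (Kf j)) (fun cc => C j cc * w1 cc),
        if_pos (Finset.mem_univ _), if_pos (Finset.mem_univ _)]
      have : C j (Sum.inl (Kf j)) * w1 (Sum.inl (Kf j))
          + C j (Sum.inr (Kf j)) * w1 (Sum.inr (Kf j))
          = σ ((Kf j : Fin (2*n)) : ℕ) *
            (C j (Sum.inl (Kf j)) * u (Kf j) + C j (Sum.inr (Kf j)) * v (Kf j)) := by
        simp only [hw1]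
        show C j (Sum.inl (Kf j)) * (σ ((Kf j : Fin (2*n)) : ℕ) * u (Kf j))
          + C j (Sum.inr (Kf j)) * (σ ((Kf j : Fin (2*n)) : ℕ) * v (Kf j)) = _
        ring
      rw [this, hker j, mul_zero]
      rfl
    have hQ : 0 ≤ qJ n (fun k => σ (k : ℕ) * v k) - qJ n (fun k => σ (k : ℕ) * u k) :=
      Q_nonneg n hn C hnorm hdiss w1 htr
    rw [qJ_mask σ hσ v, qJ_mask σ hσ u, ← mul_sub, ← Finset.sum_sub_distrib] at hQ
    have hcongr : ∀ p : Fin (2 * n),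
        σ (p : ℕ) * σ ((p.rev : Fin (2 * n)) : ℕ) *
            ((-1 : ℂ) ^ ((p : ℕ) + 1) * v p * (starRingEnd ℂ) (v p.rev))
          - σ (p : ℕ) * σ ((p.rev : Fin (2 * n)) : ℕ) *
            ((-1 : ℂ) ^ ((p : ℕ) + 1) * u p * (starRingEnd ℂ) (u p.rev))
        = σ (p : ℕ) * σ ((p.rev : Fin (2 * n)) : ℕ) * T p := by
      intro p; rw [hT]; ring
    rw [Finset.sum_congr rfl (fun p _ => hcongr p)] at hQ
    exact hQ
  -- pairwise vanishing
  have hTT : ∀ p0 : Fin (2 * n), T p0 + T p0.rev = 0 := by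
    intro p0
    have hne : p0 ≠ p0.rev := rev_ne hn p0
    set σ1 : ℕ → ℂ := fun q => if q = (p0 : ℕ) ∨ q = ((p0.rev : Fin (2*n)) : ℕ) then 1 else 0
      with hσ1
    set σ2 : ℕ → ℂ := fun q => if q = (p0 : ℕ) then -1
      else if q = ((p0.rev : Fin (2*n)) : ℕ) then 1 else 0 with hσ2
    have hσ1c : ∀ q, (starRingEnd ℂ) (σ1 q) = σ1 q := by
      intro q; simp only [hσ1]; split_ifs <;> simp
    have hσ2c : ∀ q, (starRingEnd ℂ) (σ2 q) = σ2 q := by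
      intro q; simp only [hσ2]; split_ifs <;> simp
    have hs1 : ∑ p : Fin (2 * n), σ1 (p : ℕ) * σ1 ((p.rev : Fin (2 * n)) : ℕ) * T p
        = T p0 + T p0.rev := by
      have hterm : ∀ p : Fin (2 * n), σ1 (p : ℕ) * σ1 ((p.rev : Fin (2 * n)) : ℕ) * T p
          = (if p = p0 then T p0 else 0) + (if p = p0.rev then T p0.rev else 0) := by
        intro p
        simp only [hσ1]
        by_cases h1 : p = p0
        · rw [h1, if_pos (Or.inl rfl), if_pos (Or.inr rfl), if_pos rfl, if_neg hne,
            one_mul, one_mul, add_zero]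
        · by_cases h2 : p = p0.rev
          · rw [h2, Fin.rev_rev, if_pos (Or.inr rfl), if_pos (Or.inl rfl),
              if_neg (fun h : p0.rev = p0 => hne h.symm), if_pos rfl,
              one_mul, one_mul, zero_add]
          · have e1 : ¬ ((p : ℕ) = (p0 : ℕ) ∨ (p : ℕ) = ((p0.rev : Fin (2*n)) : ℕ)) := by
              rintro (h | h)
              · exact h1 (Fin.ext h)
              · exact h2 (Fin.ext h)
            rw [if_neg e1, zero_mul, zero_mul, if_neg h1, if_neg h2, add_zero]
      rw [Finset.sum_congr rfl (fun p _ => hterm p), Finset.sum_add_distrib,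
        Finset.sum_ite_eq' Finset.univ p0 (fun _ => T p0),
        Finset.sum_ite_eq' Finset.univ p0.rev (fun _ => T p0.rev),
        if_pos (Finset.mem_univ _), if_pos (Finset.mem_univ _)]
    have hs2 : ∑ p : Fin (2 * n), σ2 (p : ℕ) * σ2 ((p.rev : Fin (2 * n)) : ℕ) * T p
        = -(T p0 + T p0.rev) := by
      have hterm : ∀ p : Fin (2 * n), σ2 (p : ℕ) * σ2 ((p.rev : Fin (2 * n)) : ℕ) * T p
          = (if p = p0 then -T p0 else 0) + (if p = p0.rev then -T p0.rev else 0) := by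
        intro p
        simp only [hσ2]
        by_cases h1 : p = p0
        · rw [h1, if_pos rfl,
            if_neg (fun h : ((p0.rev : Fin (2*n)) : ℕ) = (p0 : ℕ) => hne (Fin.ext h).symm),
            if_pos rfl, if_pos rfl, if_neg hne, add_zero]
          ring
        · by_cases h2 : p = p0.rev
          · rw [h2, Fin.rev_rev,
              if_neg (fun h : ((p0.rev : Fin (2*n)) : ℕ) = (p0 : ℕ) => hne (Fin.ext h).symm),
              if_pos rfl, if_pos rfl,
              if_neg (fun h : p0.rev = p0 => hne h.symm), if_pos rfl]
            ring
          · rw [if_neg (fun h : (p : ℕ) = (p0 : ℕ) => h1 (Fin.ext h)),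
              if_neg (fun h : (p : ℕ) = ((p0.rev : Fin (2*n)) : ℕ) => h2 (Fin.ext h)),
              zero_mul, zero_mul, if_neg h1, if_neg h2, add_zero]
      rw [Finset.sum_congr rfl (fun p _ => hterm p), Finset.sum_add_distrib,
        Finset.sum_ite_eq' Finset.univ p0 (fun _ => -T p0),
        Finset.sum_ite_eq' Finset.univ p0.rev (fun _ => -T p0.rev),
        if_pos (Finset.mem_univ _), if_pos (Finset.mem_univ _)]
      ring
    have h1 := key σ1 hσ1c
    have h2 := key σ2 hσ2c
    rw [hs1] at h1
    rw [hs2] at h2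
    have h2' : c * (T p0 + T p0.rev) ≤ 0 := by
      have : 0 ≤ -(c * (T p0 + T p0.rev)) := by rw [← mul_neg]; exact h2
      exact neg_nonneg.mp this
    have hczero : c * (T p0 + T p0.rev) = 0 := le_antisymm h2' h1
    have hcne : c ≠ 0 := by
      rw [hc]
      exact mul_ne_zero Complex.I_ne_zero (pow_ne_zero _ (by norm_num))
    rcases mul_eq_zero.mp hczero with h | h
    · exact absurd h hcne
    · exact h
  -- conclude
  rw [qJ_sub u v, ← hc]
  have hsum0 : ∑ p : Fin (2 * n), T p = 0 := by
    have hrev : ∑ p : Fin (2 * n), T p.rev = ∑ p : Fin (2 * n), T p :=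
      Fintype.sum_bijective Fin.rev Fin.rev_bijective _ _ (fun p => rfl)
    have h2 : ∑ p : Fin (2 * n), (T p + T p.rev) = 0 := by
      rw [Finset.sum_congr rfl (fun p _ => hTT p)]
      simp
    rw [Finset.sum_add_distrib, hrev] at h2
    exact add_self_eq_zero.mp h2
  have : ∑ p : Fin (2 * n), (-1 : ℂ) ^ ((p : ℕ) + 1) *
        (v p * (starRingEnd ℂ) (v p.rev) - u p * (starRingEnd ℂ) (u p.rev))
      = ∑ p : Fin (2 * n), T p := by
    apply Finset.sum_congr rfl; intro p _; rw [hT]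
  rw [this, hsum0, mul_zero]

end Stmt17Aux

/-- for a normalized dissipative rank-`2n` system `C`, the truncated
system `C^{sa}` keeping only the leading-pair entries of each row (all other entries
replaced by `0`) is self-adjoint: `q_J(v) − q_J(u) = 0` on its kernel. -/
theorem stmt17 (n : ℕ) (hn : 1 ≤ n)
    (C : Matrix (Fin (2 * n)) (Fin (2 * n) ⊕ Fin (2 * n)) ℂ)
    (hrank : C.rank = 2 * n) (hnorm : IsNormalized C) (hdiss : IsDissipativeBC n C) :
    ∀ u v : Fin (2 * n) → ℂ,
      (∀ j, ∑ k : Fin (2 * n),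
          ((if k.val = rowOrder C j then C j (Sum.inl k) else 0) * u k
            + (if k.val = rowOrder C j then C j (Sum.inr k) else 0) * v k) = 0) →
      qJ n v - qJ n u = 0 := by
  exact Stmt17Aux.stmt17_main n hn C hrank hnorm hdiss
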